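/- Let T be a densely defined closed operator on a complex Hilbert space H. Then T*T + 1 is injective on its domain and surjective onto H, and its inverse is a bounded operator on H. -/

import Mathlib

open LinearPMap MeasureTheory
open scoped InnerProductSpace

variable {H : Type*} [NormedAddCommGroup H] [InnerProductSpace ℂ H] [CompleteSpace H]

/-- The deficiency space `{x ∈ dom T* : T* x = c • x}` of an unbounded operator `T`. -/
noncomputable def deficiencySpace (T : H →ₗ.[ℂ] H) (c : ℂ) : Submodule ℂ H where
  carrier := {x | ∃ hx : x ∈ T.adjoint.domain, T.adjoint ⟨x, hx⟩ = c • x}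
  zero_mem' := by
    refine ⟨T.adjoint.domain.zero_mem, ?_⟩
    have h0 : (⟨0, T.adjoint.domain.zero_mem⟩ : T.adjoint.domain) = 0 := rfl
    rw [h0, LinearPMap.map_zero, smul_zero]
  add_mem' := by
    rintro x y ⟨hx, hx'⟩ ⟨hy, hy'⟩
    refine ⟨add_mem hx hy, ?_⟩
    have h : (⟨x + y, add_mem hx hy⟩ : T.adjoint.domain) = ⟨x, hx⟩ + ⟨y, hy⟩ := rfl
    rw [h, LinearPMap.map_add, hx', hy', smul_add]
  smul_mem' := by
    rintro a x ⟨hx, hx'⟩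
    refine ⟨Submodule.smul_mem _ a hx, ?_⟩
    have h : (⟨a • x, Submodule.smul_mem _ a hx⟩ : T.adjoint.domain) = a • (⟨x, hx⟩ : T.adjoint.domain) := rfl
    rw [h, LinearPMap.map_smul, hx', smul_comm]

/-- A partially defined operator is symmetric if `⟪T x, y⟫ = ⟪x, T y⟫` on its domain. -/
def IsSymmetricPMap (T : H →ₗ.[ℂ] H) : Prop :=
  ∀ x y : T.domain, ⟪(T x : H), (y : H)⟫_ℂ = ⟪(x : H), (T y : H)⟫_ℂ

set_option linter.unusedSectionVars false


/-- Type synonym for the domain of `T` equipped with the graph norm. -/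
def GraphDom (T : H →ₗ.[ℂ] H) : Type _ := T.domain

namespace GraphDom

variable {T : H →ₗ.[ℂ] H}

instance : AddCommGroup (GraphDom T) := inferInstanceAs (AddCommGroup T.domain)
instance : Module ℂ (GraphDom T) := inferInstanceAs (Module ℂ T.domain)

/-- View an element of `GraphDom T` as an element of `T.domain`. -/
def toD (x : GraphDom T) : T.domain := x

/-- View an element of `T.domain` as an element of `GraphDom T`. -/
def ofD (x : T.domain) : GraphDom T := x

@[simp] theorem toD_add (x y : GraphDom T) : (x + y).toD = x.toD + y.toD := rfl
@[simp] theorem toD_sub (x y : GraphDom T) : (x - y).toD = x.toD - y.toD := rfl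
@[simp] theorem toD_smul (c : ℂ) (x : GraphDom T) : (c • x).toD = c • x.toD := rfl
@[simp] theorem toD_ofD (x : T.domain) : (ofD x).toD = x := rfl

noncomputable instance core : InnerProductSpace.Core ℂ (GraphDom T) where
  inner x y := ⟪(x.toD : H), (y.toD : H)⟫_ℂ + ⟪(T x.toD : H), (T y.toD : H)⟫_ℂ
  conj_inner_symm x y := by
    simp only [_root_.map_add, inner_conj_symm]
  re_inner_nonneg x := by
    show (0:ℝ) ≤ RCLike.re (⟪(x.toD : H), (x.toD : H)⟫_ℂ + ⟪(T x.toD : H), (T x.toD : H)⟫_ℂ)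
    rw [_root_.map_add]
    exact add_nonneg inner_self_nonneg inner_self_nonneg
  add_left x y z := by
    simp only [toD_add, Submodule.coe_add, LinearPMap.map_add, inner_add_left]
    ring
  smul_left x y c := by
    simp only [toD_smul, Submodule.coe_smul, LinearPMap.map_smul, inner_smul_left]
    ring
  definite x hx := by
    have hx' : ⟪(x.toD : H), (x.toD : H)⟫_ℂ + ⟪(T x.toD : H), (T x.toD : H)⟫_ℂ = 0 := hx
    have h := congrArg (RCLike.re (K := ℂ)) hx' 
    rw [_root_.map_add, ← norm_sq_eq_re_inner, ← norm_sq_eq_re_inner, _root_.map_zero] at h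
    have h1 : ‖(x.toD : H)‖ ^ 2 = 0 := by nlinarith [sq_nonneg ‖(T x.toD : H)‖]
    have h2 : ‖(x.toD : H)‖ = 0 := by nlinarith [norm_nonneg (x.toD : H)]
    exact Subtype.ext (norm_eq_zero.mp h2)

noncomputable instance : NormedAddCommGroup (GraphDom T) :=
  (core (T := T)).toNormedAddCommGroup

noncomputable instance : InnerProductSpace ℂ (GraphDom T) :=
  InnerProductSpace.ofCore _

theorem inner_def (x y : GraphDom T) :
    ⟪x, y⟫_ℂ = ⟪(x.toD : H), (y.toD : H)⟫_ℂ + ⟪(T x.toD : H), (T y.toD : H)⟫_ℂ := rfl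

theorem norm_sq (x : GraphDom T) :
    ‖x‖ ^ 2 = ‖(x.toD : H)‖ ^ 2 + ‖(T x.toD : H)‖ ^ 2 := by
  have h := norm_sq_eq_re_inner (𝕜 := ℂ) x
  rw [inner_def, _root_.map_add, ← norm_sq_eq_re_inner, ← norm_sq_eq_re_inner] at h
  exact h

theorem norm_coe_le (x : GraphDom T) : ‖(x.toD : H)‖ ≤ ‖x‖ := by
  have h := norm_sq (T := T) x
  nlinarith [norm_nonneg x, norm_nonneg (x.toD : H), sq_nonneg ‖(T x.toD : H)‖]

theorem norm_T_le (x : GraphDom T) : ‖(T x.toD : H)‖ ≤ ‖x‖ := by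
  have h := norm_sq (T := T) x
  nlinarith [norm_nonneg x, norm_nonneg (T x.toD : H), sq_nonneg ‖(x.toD : H)‖]

theorem norm_le_add (x : GraphDom T) : ‖x‖ ≤ ‖(x.toD : H)‖ + ‖(T x.toD : H)‖ := by
  have h := norm_sq (T := T) x
  nlinarith [norm_nonneg x, norm_nonneg (x.toD : H), norm_nonneg (T x.toD : H)]

variable (T) in
/-- The inclusion `GraphDom T → H` as a continuous linear map. -/
noncomputable def coeCLM : GraphDom T →L[ℂ] H :=
  LinearMap.mkContinuous
    { toFun := fun x => (x.toD : H)
      map_add' := fun x y => rfl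
      map_smul' := fun c x => rfl } 1
    (fun x => by rw [one_mul]; exact norm_coe_le x)

variable (T) in
/-- The map `x ↦ T x` as a continuous linear map `GraphDom T → H`. -/
noncomputable def TCLM : GraphDom T →L[ℂ] H :=
  LinearMap.mkContinuous
    { toFun := fun x => (T x.toD : H)
      map_add' := fun x y => by simp [LinearPMap.map_add]
      map_smul' := fun c x => by simp [LinearPMap.map_smul] } 1
    (fun x => by simpa using norm_T_le x)

@[simp] theorem coeCLM_apply (x : GraphDom T) : coeCLM T x = (x.toD : H) := rfl
@[simp] theorem TCLM_apply (x : GraphDom T) : TCLM T x = (T x.toD : H) := rfl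

theorem completeSpace (hclosed : T.IsClosed) : CompleteSpace (GraphDom T) := by
  apply Metric.complete_of_cauchySeq_tendsto
  intro u hu
  have h1 : CauchySeq fun n => coeCLM T (u n) :=
    (coeCLM T).uniformContinuous.comp_cauchySeq hu
  have h2 : CauchySeq fun n => TCLM T (u n) :=
    (TCLM T).uniformContinuous.comp_cauchySeq hu
  obtain ⟨a, ha⟩ := cauchySeq_tendsto_of_complete h1
  obtain ⟨b, hb⟩ := cauchySeq_tendsto_of_complete h2
  have hmem : (a, b) ∈ T.graph := by
    refine hclosed.mem_of_tendsto (ha.prodMk_nhds hb)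
      (Filter.Eventually.of_forall fun n => ?_)
    exact T.mem_graph (u n).toD
  rw [T.mem_graph_iff] at hmem
  obtain ⟨y, hy1, hy2⟩ := hmem
  refine ⟨ofD y, ?_⟩
  rw [tendsto_iff_dist_tendsto_zero]
  have key : ∀ n, dist (u n) (ofD y) ≤ ‖((u n).toD : H) - a‖ + ‖(T (u n).toD : H) - b‖ := by
    intro n
    rw [dist_eq_norm]
    refine (norm_le_add _).trans ?_
    apply add_le_add
    · simp [hy1]
    · simp [LinearPMap.map_sub, hy2]
  have t1 : Filter.Tendsto (fun n => ‖((u n).toD : H) - a‖) Filter.atTop (nhds 0) := by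
    rw [← tendsto_iff_norm_sub_tendsto_zero] at *
    exact ha
  have t2 : Filter.Tendsto (fun n => ‖(T (u n).toD : H) - b‖) Filter.atTop (nhds 0) := by
    rw [← tendsto_iff_norm_sub_tendsto_zero] at *
    exact hb
  refine squeeze_zero (fun n => dist_nonneg) key ?_
  simpa using t1.add t2

end GraphDom

/-- For a densely defined closed operator `T` on a complex Hilbert space, the operator
`T* T + 1` (with domain `{ξ ∈ dom T : T ξ ∈ dom T*}`) is injective, surjective onto `H`,
and its inverse is bounded. -/
theorem starT_T_add_one_bijective_boundedInverse
    (T : H →ₗ.[ℂ] H) (hdense : Dense (T.domain : Set H)) (hclosed : T.IsClosed) :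
    (∀ (x y : T.domain) (hx : (T x : H) ∈ T.adjoint.domain)
        (hy : (T y : H) ∈ T.adjoint.domain),
        T.adjoint ⟨(T x : H), hx⟩ + (x : H) = T.adjoint ⟨(T y : H), hy⟩ + (y : H) →
          (x : H) = (y : H)) ∧
    (∀ z : H, ∃ (x : T.domain) (hx : (T x : H) ∈ T.adjoint.domain),
        T.adjoint ⟨(T x : H), hx⟩ + (x : H) = z) ∧
    (∃ C : ℝ, ∀ (x : T.domain) (hx : (T x : H) ∈ T.adjoint.domain),
        ‖(x : H)‖ ≤ C * ‖T.adjoint ⟨(T x : H), hx⟩ + (x : H)‖) := by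

  have hfa := adjoint_isFormalAdjoint hdense
  have key : ∀ (x : T.domain) (hx : (T x : H) ∈ T.adjoint.domain),
      ‖(x : H)‖ ≤ ‖T.adjoint ⟨(T x : H), hx⟩ + (x : H)‖ := by
    intro x hx
    set w := T.adjoint ⟨(T x : H), hx⟩ + (x : H) with hw
    have h1 : ⟪w, (x : H)⟫_ℂ = ⟪(T x : H), (T x : H)⟫_ℂ + ⟪(x : H), (x : H)⟫_ℂ := by
      rw [hw, inner_add_left]
      congr 1
      exact hfa ⟨(T x : H), hx⟩ x
    have h2 : ‖(x : H)‖ ^ 2 ≤ RCLike.re ⟪w, (x : H)⟫_ℂ := by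
      rw [h1, _root_.map_add, ← norm_sq_eq_re_inner, ← norm_sq_eq_re_inner]
      nlinarith [sq_nonneg ‖(T x : H)‖]
    have h3 : RCLike.re ⟪w, (x : H)⟫_ℂ ≤ ‖w‖ * ‖(x : H)‖ :=
      le_trans (RCLike.re_le_norm _) (norm_inner_le_norm _ _)
    rcases eq_or_lt_of_le (norm_nonneg (x : H)) with h0 | h0
    · rw [← h0]; exact norm_nonneg w
    · nlinarith
  refine ⟨?_, ?_, ⟨1, fun x hx => by simpa using key x hx⟩⟩
  · -- injectivity
    intro x y hx hy heq
    set d := x - y with hd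
    have hTd : T d = T x - T y := T.map_sub x y
    have hdmem : (T d : H) ∈ T.adjoint.domain := by
      rw [hTd]; exact sub_mem hx hy
    have hsub : (⟨(T d : H), hdmem⟩ : T.adjoint.domain)
        = ⟨(T x : H), hx⟩ - ⟨(T y : H), hy⟩ := by
      apply Subtype.ext
      simp [hTd]
    have hz : T.adjoint ⟨(T d : H), hdmem⟩ + (d : H) = 0 := by
      rw [hsub, LinearPMap.map_sub]
      have hcd : ((d : T.domain) : H) = (x : H) - (y : H) := rfl
      rw [hcd, sub_add_sub_comm, heq, sub_self]
    have := key d hdmem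
    rw [hz, norm_zero] at this
    have : ‖(x : H) - (y : H)‖ = 0 := le_antisymm this (norm_nonneg _)
    exact sub_eq_zero.mp (norm_eq_zero.mp this)
  · -- surjectivity
    haveI := GraphDom.completeSpace (T := T) hclosed
    intro z
    set φ : GraphDom T →L[ℂ] ℂ := (innerSL ℂ z).comp (GraphDom.coeCLM T) with hφ
    set x' : GraphDom T := (InnerProductSpace.toDual ℂ (GraphDom T)).symm φ with hx'def
    have hx' : ∀ y : GraphDom T, ⟪x', y⟫_ℂ = ⟪z, (y.toD : H)⟫_ℂ := by
      intro y
      rw [hx'def]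
      rw [InnerProductSpace.toDual_symm_apply]
      rfl
    have hkey : ∀ y : T.domain, ⟪z - (x'.toD : H), (y : H)⟫_ℂ = ⟪(T x'.toD : H), (T y : H)⟫_ℂ := by
      intro y
      have h := hx' (GraphDom.ofD y)
      rw [GraphDom.inner_def, GraphDom.toD_ofD] at h
      rw [inner_sub_left]
      linear_combination -h
    have hmem : (T x'.toD : H) ∈ T.adjoint.domain :=
      mem_adjoint_domain_of_exists _ ⟨z - (x'.toD : H), fun y => hkey y⟩
    have hval : T.adjoint ⟨(T x'.toD : H), hmem⟩ = z - (x'.toD : H) :=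
      adjoint_apply_eq hdense _ (fun y => hkey y)
    exact ⟨x'.toD, hmem, by rw [hval]; abel⟩
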